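/- Let M be a pointed metric space such that the pair (M, ℝ) has the Lip-BPB property in molecular form, let ρ ∈ [0,1), and let Y be a real Banach space having ACK structure with parameter ρ witnessed by a 1-norming set Γ ⊆ B_{Y*}. Then for every ε > 0 there exists η > 0 such that: for every Γ-flat map T ∈ Lip₀(M, Y) with ‖T‖_L = 1 and all distinct points p, q ∈ M with ‖T(p) − T(q)‖ > (1 − η) d(p,q), there exist S ∈ Lip₀(M, Y) with ‖S‖_L = 1 and distinct points r, s ∈ M such that ‖S(r) − S(s)‖ = d(r,s), ρ((p,q),(r,s)) < ε, and ‖T − S‖_L < ε. -/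

import Mathlib

open Set Metric NNReal MeasureTheory

/-- A Lipschitz map vanishing at the base point `z`, i.e. an element of `Lip₀(M,Y)`. -/
def IsLip0 {M Y : Type*} [MetricSpace M] [NormedAddCommGroup Y]
    (z : M) (F : M → Y) : Prop :=
  (∃ K : ℝ≥0, LipschitzWith K F) ∧ F z = 0

/-- The Lipschitz norm `‖F‖_L = sup {‖F p - F q‖ / d(p,q) : p ≠ q}`. -/
noncomputable def lipNorm {M Y : Type*} [MetricSpace M] [NormedAddCommGroup Y]
    (F : M → Y) : ℝ :=
  sSup {r : ℝ | ∃ p q : M, p ≠ q ∧ r = ‖F p - F q‖ / dist p q}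

/-- `F` strongly attains its norm. -/
def StronglyAttains {M Y : Type*} [MetricSpace M] [NormedAddCommGroup Y]
    (F : M → Y) : Prop :=
  ∃ p q : M, p ≠ q ∧ ‖F p - F q‖ = lipNorm F * dist p q

/-- `F` is Lipschitz compact: its Lipschitz image is relatively compact. -/
def IsLipCompact {M Y : Type*} [MetricSpace M] [NormedAddCommGroup Y] [NormedSpace ℝ Y]
    (F : M → Y) : Prop :=
  IsCompact (closure {y : Y | ∃ p q : M, p ≠ q ∧ y = (dist p q)⁻¹ • (F p - F q)})

/-- The pair `(M,Y)` has the Lip-BPB property witnessed by the function `η`. -/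
def LipBPBWith (M : Type*) [MetricSpace M] (z : M)
    (Y : Type*) [NormedAddCommGroup Y] (η : ℝ → ℝ) : Prop :=
  (∀ ε > 0, η ε > 0) ∧
  ∀ ε > 0, ∀ F : M → Y, IsLip0 z F → lipNorm F = 1 →
    ∀ p q : M, p ≠ q → ‖F p - F q‖ > (1 - η ε) * dist p q →
      ∃ G : M → Y, IsLip0 z G ∧ ∃ r s : M, r ≠ s ∧
        ‖G r - G s‖ = dist r s ∧ lipNorm G = 1 ∧
        lipNorm (fun x => G x - F x) < ε ∧
        (dist p r + dist q s) / dist p q < ε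

/-- The pair `(M,Y)` has the Lip-BPB property. -/
def LipBPB (M : Type*) [MetricSpace M] (z : M)
    (Y : Type*) [NormedAddCommGroup Y] : Prop :=
  ∃ η : ℝ → ℝ, LipBPBWith M z Y η

/-- The pair `(M,Y)` has the Lip-BPB property for Lipschitz compact maps
witnessed by the function `η`. -/
def LipBPBCompactWith (M : Type*) [MetricSpace M] (z : M)
    (Y : Type*) [NormedAddCommGroup Y] [NormedSpace ℝ Y] (η : ℝ → ℝ) : Prop :=
  (∀ ε > 0, η ε > 0) ∧
  ∀ ε > 0, ∀ F : M → Y, IsLip0 z F → IsLipCompact F → lipNorm F = 1 →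
    ∀ p q : M, p ≠ q → ‖F p - F q‖ > (1 - η ε) * dist p q →
      ∃ G : M → Y, IsLip0 z G ∧ IsLipCompact G ∧ ∃ r s : M, r ≠ s ∧
        ‖G r - G s‖ = dist r s ∧ lipNorm G = 1 ∧
        lipNorm (fun x => G x - F x) < ε ∧
        (dist p r + dist q s) / dist p q < ε

/-- The pair `(M,Y)` has the Lip-BPB property for Lipschitz compact maps. -/
def LipBPBCompact (M : Type*) [MetricSpace M] (z : M)
    (Y : Type*) [NormedAddCommGroup Y] [NormedSpace ℝ Y] : Prop :=
  ∃ η : ℝ → ℝ, LipBPBCompactWith M z Y η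

/-- `SA(M,Y)` is dense in `Lip₀(M,Y)`. -/
def SADense (M : Type*) [MetricSpace M] (z : M)
    (Y : Type*) [NormedAddCommGroup Y] : Prop :=
  ∀ F : M → Y, IsLip0 z F → ∀ ε > 0,
    ∃ G : M → Y, IsLip0 z G ∧ StronglyAttains G ∧ lipNorm (fun x => G x - F x) < ε

/-- `SA_K(M,Y)` is dense in `Lipc(M,Y)`. -/
def SAKDense (M : Type*) [MetricSpace M] (z : M)
    (Y : Type*) [NormedAddCommGroup Y] [NormedSpace ℝ Y] : Prop :=
  ∀ F : M → Y, IsLip0 z F → IsLipCompact F → ∀ ε > 0,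
    ∃ G : M → Y, IsLip0 z G ∧ IsLipCompact G ∧ StronglyAttains G ∧
      lipNorm (fun x => G x - F x) < ε

/-- The molecule distance `ρ((p,q),(r,s))`: the distance in the Lipschitz-free space between
the molecules determined by the pairs `(p,q)` and `(r,s)`. -/
noncomputable def molDist {M : Type*} [MetricSpace M] (z : M) (p q r s : M) : ℝ :=
  sSup {t : ℝ | ∃ f : M → ℝ, IsLip0 z f ∧ lipNorm f ≤ 1 ∧
    t = |(f p - f q) / dist p q - (f r - f s) / dist r s|}

/-- The pair `(M,ℝ)` has the Lip-BPB property in molecular form witnessed by `η`. -/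
def LipBPBMolWith {M : Type*} [MetricSpace M] (z : M) (η : ℝ → ℝ) : Prop :=
  (∀ ε > 0, η ε > 0) ∧
  ∀ ε > 0, ∀ f : M → ℝ, IsLip0 z f → lipNorm f = 1 →
    ∀ p q : M, p ≠ q → |f p - f q| > (1 - η ε) * dist p q →
      ∃ g : M → ℝ, IsLip0 z g ∧ lipNorm g = 1 ∧
        ∃ r s : M, r ≠ s ∧ |g r - g s| = dist r s ∧
          lipNorm (fun x => f x - g x) < ε ∧ molDist z p q r s < ε

/-- A set of functionals on `Y` is weak-star open. -/
def IsWeakStarOpen {Y : Type*} [NormedAddCommGroup Y] [NormedSpace ℝ Y]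
    (U : Set (Y →L[ℝ] ℝ)) : Prop :=
  IsOpen (X := WeakDual ℝ Y) (StrongDual.toWeakDual '' U)

/-- `Γ ⊆ B_{Y*}` is a 1-norming set. -/
def IsOneNorming {Y : Type*} [NormedAddCommGroup Y] [NormedSpace ℝ Y]
    (Γ : Set (Y →L[ℝ] ℝ)) : Prop :=
  (∀ φ ∈ Γ, ‖φ‖ ≤ 1) ∧ ∀ y : Y, ‖y‖ = sSup {t : ℝ | ∃ φ ∈ Γ, t = |φ y|}

/-- `Y` has ACK structure with parameter `ρ`, witnessed by the 1-norming set `Γ`. -/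
def ACKWith (Y : Type*) [NormedAddCommGroup Y] [NormedSpace ℝ Y]
    (ρ : ℝ) (Γ : Set (Y →L[ℝ] ℝ)) : Prop :=
  IsOneNorming Γ ∧
  ∀ ε > (0 : ℝ), ∀ U : Set (Y →L[ℝ] ℝ), U.Nonempty → U ⊆ Γ →
    (∃ W : Set (Y →L[ℝ] ℝ), IsWeakStarOpen W ∧ U = W ∩ Γ) →
    ∃ V ⊆ U, V.Nonempty ∧ ∃ y₁ ∈ V, ∃ e : Y, ‖e‖ = 1 ∧ ∃ F : Y →L[ℝ] Y,
      ‖F e‖ = 1 ∧ ‖F‖ = 1 ∧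
      y₁ (F e) = 1 ∧
      y₁.comp F = y₁ ∧
      (∀ φ ∈ Γ, φ ∉ {ψ ∈ Γ | ‖ψ.comp F‖ + (1 - ε) * ‖ψ - ψ.comp F‖ ≤ 1} →
        |φ (F e)| ≤ ρ) ∧
      (∀ φ ∈ Γ, ∃ (n : ℕ) (v : Fin n → (Y →L[ℝ] ℝ)) (c : Fin n → ℝ),
        (∀ k, v k ∈ V) ∧ (∑ k, |c k|) ≤ 1 ∧
        ‖φ.comp F - ∑ k, c k • v k‖ < ε) ∧
      (∀ φ ∈ V, |φ e - 1| ≤ ε)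

/-- `Y` has ACK structure with parameter `ρ`. -/
def HasACK (Y : Type*) [NormedAddCommGroup Y] [NormedSpace ℝ Y] (ρ : ℝ) : Prop :=
  ∃ Γ : Set (Y →L[ℝ] ℝ), ACKWith Y ρ Γ

/-- `T : M → Y` is a `Γ`-flat map. -/
def IsGammaFlat {M Y : Type*} [MetricSpace M] [NormedAddCommGroup Y] [NormedSpace ℝ Y]
    (Γ : Set (Y →L[ℝ] ℝ)) (T : M → Y) : Prop :=
  ∀ U : Set (Y →L[ℝ] ℝ), IsWeakStarOpen U → (U ∩ Γ).Nonempty → ∀ δ > (0 : ℝ),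
    ∃ V : Set (Y →L[ℝ] ℝ), IsWeakStarOpen V ∧ V ⊆ U ∧ (V ∩ Γ).Nonempty ∧
      ∀ φ ∈ V ∩ Γ, ∀ ψ ∈ V ∩ Γ, lipNorm (fun x => φ (T x) - ψ (T x)) < δ

private theorem lipNorm_le' {M Y : Type*} [MetricSpace M] [NormedAddCommGroup Y] {F : M → Y}
    {C : ℝ} (hC : 0 ≤ C) (h : ∀ p q : M, p ≠ q → ‖F p - F q‖ ≤ C * dist p q) :
    lipNorm F ≤ C := by
  apply Real.sSup_le _ hC
  rintro x ⟨p, q, hpq, rfl⟩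
  rw [div_le_iff₀ (dist_pos.2 hpq)]
  exact h p q hpq

private theorem lipNorm_nonneg' {M Y : Type*} [MetricSpace M] [NormedAddCommGroup Y]
    (F : M → Y) : 0 ≤ lipNorm F := by
  apply Real.sSup_nonneg
  rintro x ⟨p, q, hpq, rfl⟩
  positivity

private theorem norm_sub_le_lipNorm {M Y : Type*} [MetricSpace M] [NormedAddCommGroup Y]
    {F : M → Y} {K : ℝ≥0} (hK : LipschitzWith K F) (p q : M) :
    ‖F p - F q‖ ≤ lipNorm F * dist p q := by
  rcases eq_or_ne p q with rfl | h
  · simp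
  · have hb : BddAbove {r : ℝ | ∃ p q : M, p ≠ q ∧ r = ‖F p - F q‖ / dist p q} := by
      refine ⟨(K : ℝ), ?_⟩
      rintro x ⟨a, b, hab, rfl⟩
      rw [div_le_iff₀ (dist_pos.2 hab)]
      have := hK.dist_le_mul a b
      rwa [dist_eq_norm] at this
    have hmem : ‖F p - F q‖ / dist p q ∈
        {r : ℝ | ∃ p q : M, p ≠ q ∧ r = ‖F p - F q‖ / dist p q} := ⟨p, q, h, rfl⟩
    have h2 := le_csSup hb hmem
    rw [div_le_iff₀ (dist_pos.2 h)] at h2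
    exact h2

private theorem oneNorming_norm_le {Y : Type*} [NormedAddCommGroup Y] [NormedSpace ℝ Y]
    {Γ : Set (Y →L[ℝ] ℝ)} (hΓ : IsOneNorming Γ) {y : Y} {C : ℝ} (hC : 0 ≤ C)
    (h : ∀ φ ∈ Γ, |φ y| ≤ C) : ‖y‖ ≤ C := by
  rw [hΓ.2 y]
  apply Real.sSup_le _ hC
  rintro t ⟨φ, hφ, rfl⟩
  exact h φ hφ
set_option maxHeartbeats 1000000 in
/-- If `(M, ℝ)` has the Lip-BPB property (in molecular form) and `Y ∈ ACK_ρ` witnessed by the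
1-norming set `Γ`, then for every `ε > 0` there is `η > 0` such that every norm-one `Γ`-flat
`T ∈ Lip₀(M,Y)` almost attaining its norm at a pair of distinct points can be `ε`-approximated
by a norm-one `S` strongly attaining its norm at a pair whose molecule is `ε`-close. -/
theorem lipBPB_gammaFlat_of_ACK {M Y : Type*} [MetricSpace M] [CompleteSpace M]
    [NormedAddCommGroup Y] [NormedSpace ℝ Y] [CompleteSpace Y]
    (z : M) (hM : ∃ η : ℝ → ℝ, LipBPBMolWith z η)
    (ρ : ℝ) (hρ0 : 0 ≤ ρ) (hρ1 : ρ < 1)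
    (Γ : Set (Y →L[ℝ] ℝ)) (hY : ACKWith Y ρ Γ) :
    ∀ ε > (0 : ℝ), ∃ η > (0 : ℝ),
      ∀ T : M → Y, IsLip0 z T → IsGammaFlat Γ T → lipNorm T = 1 →
        ∀ p q : M, p ≠ q → ‖T p - T q‖ > (1 - η) * dist p q →
          ∃ Sm : M → Y, IsLip0 z Sm ∧ lipNorm Sm = 1 ∧
            ∃ r s : M, r ≠ s ∧ ‖Sm r - Sm s‖ = dist r s ∧
              molDist z p q r s < ε ∧ lipNorm (fun x => T x - Sm x) < ε := by
  obtain ⟨ηm, hηm⟩ := hM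
  intro ε hε
  set εa : ℝ := min (ε / 8) (1 / 2) with hεa_def
  have hεa_pos : 0 < εa := lt_min (by linarith) (by norm_num)
  have hεa_le : εa ≤ ε / 8 := min_le_left _ _
  have hεa_half : εa ≤ 1 / 2 := min_le_right _ _
  have hP : 0 < 1 - ρ := by linarith
  set B : ℝ := εa * (1 - ρ) / 8 with hB_def
  have hB_pos : 0 < B := by positivity
  have hB_le : B ≤ εa / 8 := by
    have h1 : εa * (1 - ρ) ≤ εa * 1 := by nlinarith
    rw [hB_def]; linarith
  have hB_lt_ε : B < ε := by linarith
  have h8B : εa * (1 - ρ) = 8 * B := by rw [hB_def]; ring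
  set μ : ℝ := min B εa with hμ_def
  have hμ_pos : 0 < μ := lt_min hB_pos hεa_pos
  have hμB : μ ≤ B := min_le_left _ _
  have hμεa : μ ≤ εa := min_le_right _ _


  have hηmB : 0 < ηm B := hηm.1 B hB_pos
  set η : ℝ := min (ηm B) (min B (1 / 2)) with hη_def
  have hη_pos : 0 < η := lt_min hηmB (lt_min hB_pos (by norm_num))
  have hη_ηm : η ≤ ηm B := min_le_left _ _
  have hη_B : η ≤ B := le_trans (min_le_right _ _) (min_le_left _ _)
  have hη_half : η ≤ 1 / 2 := le_trans (min_le_right _ _) (min_le_right _ _)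
  refine ⟨η, hη_pos, ?_⟩
  intro T hT hflat hTnorm p q hpq hTpq
  obtain ⟨⟨KT, hKT⟩, hTz⟩ := hT
  have hdpq : 0 < dist p q := dist_pos.2 hpq
  have hT1 : ∀ x x' : M, ‖T x - T x'‖ ≤ dist x x' := by
    intro x x'
    have h := norm_sub_le_lipNorm hKT x x'
    rwa [hTnorm, one_mul] at h
  have hΓ1 : ∀ φ ∈ Γ, ‖φ‖ ≤ 1 := hY.1.1
  have habs : ∀ φ ∈ Γ, ∀ y : Y, |φ y| ≤ ‖y‖ := by
    intro φ hφ y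
    calc |φ y| = ‖φ y‖ := (Real.norm_eq_abs _).symm
    _ ≤ ‖φ‖ * ‖y‖ := φ.le_opNorm y
    _ ≤ 1 * ‖y‖ := mul_le_mul_of_nonneg_right (hΓ1 φ hφ) (norm_nonneg y)
    _ = ‖y‖ := one_mul _
  -- a functional in Γ almost attaining the norm of `T p - T q`
  have hφ0 : ∃ φ₀ ∈ Γ, (1 - η) * dist p q < |φ₀ (T p - T q)| := by
    by_contra hc
    push_neg at hc
    have h1 : ‖T p - T q‖ ≤ (1 - η) * dist p q :=
      oneNorming_norm_le hY.1 (by nlinarith) hc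
    linarith
  obtain ⟨φ₀, hφ₀Γ, hφ₀⟩ := hφ0
  set U₀ : Set (Y →L[ℝ] ℝ) := {φ | (1 - η) * dist p q < |φ (T p - T q)|} with hU₀_def
  have hU₀open : IsWeakStarOpen U₀ := by
    have himg : StrongDual.toWeakDual '' U₀ =
        {ψ : WeakDual ℝ Y | (1 - η) * dist p q < |ψ (T p - T q)|} := by
      ext ψ
      constructor
      · rintro ⟨φ, hφ, rfl⟩; exact hφ
      · intro h; exact ⟨ψ, h, rfl⟩
    rw [IsWeakStarOpen, himg]
    exact isOpen_lt continuous_const ((WeakDual.eval_continuous (T p - T q)).abs)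
  obtain ⟨W, hWopen, hWU₀, hWne, hWdiam⟩ := hflat U₀ hU₀open ⟨φ₀, hφ₀, hφ₀Γ⟩ B hB_pos
  obtain ⟨V, hVW, hVne, y₁, hy₁V, e, he, F, hFe1, hFnorm, hy₁Fe, hy₁F, hρprop, happrox, heprop⟩ :=
    hY.2 μ hμ_pos (W ∩ Γ) hWne Set.inter_subset_right ⟨W, hWopen, rfl⟩
  have hy₁WΓ : y₁ ∈ W ∩ Γ := hVW hy₁V
  have hy₁Γ : y₁ ∈ Γ := hy₁WΓ.2
  have hy₁U₀ : (1 - η) * dist p q < |y₁ (T p - T q)| := hWU₀ hy₁WΓ.1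
  -- the scalar function `f = y₁ ∘ T` and its normalization
  set f : M → ℝ := fun x => y₁ (T x) with hf_def
  have hf_sub : ∀ x x' : M, f x - f x' = y₁ (T x - T x') := by
    intro x x'; rw [hf_def]; simp [map_sub]
  have hf_ptw : ∀ x x' : M, |f x - f x'| ≤ ‖T x - T x'‖ := by
    intro x x'
    rw [hf_sub]
    exact habs y₁ hy₁Γ _
  have hf_ptw' : ∀ x x' : M, |f x - f x'| ≤ dist x x' :=
    fun x x' => (hf_ptw x x').trans (hT1 x x')
  have hfK : LipschitzWith KT f := by
    apply LipschitzWith.of_dist_le_mul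
    intro x x'
    rw [Real.dist_eq]
    calc |f x - f x'| ≤ ‖T x - T x'‖ := hf_ptw x x'
    _ = dist (T x) (T x') := (dist_eq_norm _ _).symm
    _ ≤ KT * dist x x' := hKT.dist_le_mul x x'
  set L : ℝ := lipNorm f with hL_def
  have hL_le1 : L ≤ 1 := by
    apply lipNorm_le' (by norm_num)
    intro x x' _
    rw [Real.norm_eq_abs, one_mul]
    exact hf_ptw' x x'
  have hfpq : (1 - η) * dist p q < |f p - f q| := by rw [hf_sub]; exact hy₁U₀
  have hf_lip : ∀ x x' : M, |f x - f x'| ≤ L * dist x x' := by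
    intro x x'
    have h := norm_sub_le_lipNorm hfK x x'
    rwa [Real.norm_eq_abs] at h
  have hL_lb : 1 - η < L := by
    have h1 := hf_lip p q
    have h2 : (1 - η) * dist p q < L * dist p q := by linarith
    exact lt_of_mul_lt_mul_right h2 hdpq.le
  have hL_pos : 0 < L := by linarith
  set fh : M → ℝ := fun x => f x / L with hfh_def
  have hfh_ptw : ∀ x x' : M, |fh x - fh x'| = |f x - f x'| / L := by
    intro x x'
    rw [hfh_def]
    simp only
    rw [div_sub_div_same, abs_div, abs_of_pos hL_pos]
  have hfhK : LipschitzWith 1 fh := by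
    apply LipschitzWith.of_dist_le_mul
    intro x x'
    rw [Real.dist_eq, hfh_ptw, NNReal.coe_one, one_mul, div_le_iff₀ hL_pos]
    calc |f x - f x'| ≤ L * dist x x' := hf_lip x x'
    _ = dist x x' * L := mul_comm _ _
  have hfh0 : IsLip0 z fh := by
    refine ⟨⟨1, hfhK⟩, ?_⟩
    rw [hfh_def]
    simp [hf_def, hTz]
  have hfh_norm : lipNorm fh = 1 := by
    apply le_antisymm
    · apply lipNorm_le' (by norm_num)
      intro x x' _
      rw [Real.norm_eq_abs, one_mul, hfh_ptw, div_le_iff₀ hL_pos]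
      calc |f x - f x'| ≤ L * dist x x' := hf_lip x x'
      _ = dist x x' * L := mul_comm _ _
    · have hb1 : ∀ x x' : M, x ≠ x' → ‖f x - f x'‖ ≤ (lipNorm fh * L) * dist x x' := by
        intro x x' _
        have h2 := norm_sub_le_lipNorm hfhK x x'
        rw [Real.norm_eq_abs, hfh_ptw, div_le_iff₀ hL_pos] at h2
        rw [Real.norm_eq_abs]
        calc |f x - f x'| ≤ lipNorm fh * dist x x' * L := h2
        _ = (lipNorm fh * L) * dist x x' := by ring
      have hL_le : L ≤ lipNorm fh * L :=
        lipNorm_le' (mul_nonneg (lipNorm_nonneg' _) hL_pos.le) hb1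
      nlinarith [hL_le, hL_pos]
  have hfhpq : |fh p - fh q| > (1 - ηm B) * dist p q := by
    rw [hfh_ptw]
    have h2 : |f p - f q| ≤ |f p - f q| / L := by
      rw [le_div_iff₀ hL_pos]
      nlinarith [abs_nonneg (f p - f q), hL_le1]
    have h3 : (1 - ηm B) * dist p q ≤ (1 - η) * dist p q :=
      mul_le_mul_of_nonneg_right (by linarith) hdpq.le
    linarith
  obtain ⟨g, hg0, hg1, r, s, hrs, hgrs, hfg, hmol⟩ :=
    hηm.2 B hB_pos fh hfh0 hfh_norm p q hpq hfhpq
  obtain ⟨⟨Kg, hKg⟩, hgz⟩ := hg0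
  have hdrs : 0 < dist r s := dist_pos.2 hrs
  have hg_ptw : ∀ x x' : M, |g x - g x'| ≤ dist x x' := by
    intro x x'
    have h := norm_sub_le_lipNorm hKg x x'
    rwa [Real.norm_eq_abs, hg1, one_mul] at h
  set θ : ℝ := B + η with hθ_def
  have hθ_nonneg : 0 ≤ θ := by positivity
  have hθ_le : θ ≤ 2 * B := by rw [hθ_def]; linarith
  -- the key pointwise estimate ‖g - y₁ ∘ T‖_L ≤ θ
  have hθ_ptw : ∀ x x' : M, |(g x - f x) - (g x' - f x')| ≤ θ * dist x x' := by
    intro x x'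
    have h1 : |(fh x - g x) - (fh x' - g x')| ≤ B * dist x x' := by
      have hKfg : LipschitzWith (1 + Kg) (fun a => fh a - g a) := by
        apply LipschitzWith.of_dist_le_mul
        intro a b
        rw [Real.dist_eq]
        have e1 : (fh a - g a) - (fh b - g b) = (fh a - fh b) - (g a - g b) := by ring
        have h2 : |fh a - fh b| ≤ 1 * dist a b := by
          have := hfhK.dist_le_mul a b
          rwa [Real.dist_eq, NNReal.coe_one] at this
        have h3 : |g a - g b| ≤ (Kg : ℝ) * dist a b := by
          have := hKg.dist_le_mul a b
          rwa [Real.dist_eq] at this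
        calc |(fh a - g a) - (fh b - g b)| = |(fh a - fh b) - (g a - g b)| := by rw [e1]
        _ ≤ |fh a - fh b| + |g a - g b| := abs_sub _ _
        _ ≤ 1 * dist a b + (Kg : ℝ) * dist a b := add_le_add h2 h3
        _ = ((1 + Kg : ℝ≥0) : ℝ) * dist a b := by push_cast; ring
      have h4 := norm_sub_le_lipNorm hKfg x x'
      rw [Real.norm_eq_abs] at h4
      calc |(fh x - g x) - (fh x' - g x')| ≤
          lipNorm (fun a => fh a - g a) * dist x x' := h4
      _ ≤ B * dist x x' := mul_le_mul_of_nonneg_right hfg.le dist_nonneg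
    have h2 : |(fh x - f x) - (fh x' - f x')| ≤ η * dist x x' := by
      have e2 : (fh x - f x) - (fh x' - f x') = (f x - f x') * (1 / L - 1) := by
        rw [hfh_def]
        simp only
        field_simp
      rw [e2, abs_mul]
      have h1L : |1 / L - 1| = 1 / L - 1 := by
        apply abs_of_nonneg
        rw [sub_nonneg, le_div_iff₀ hL_pos, one_mul]
        exact hL_le1
      rw [h1L]
      have h5 : 0 ≤ 1 / L - 1 := by
        rw [sub_nonneg, le_div_iff₀ hL_pos, one_mul]; exact hL_le1
      calc |f x - f x'| * (1 / L - 1) ≤ (L * dist x x') * (1 / L - 1) :=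
        mul_le_mul_of_nonneg_right (hf_lip x x') h5
      _ = (1 - L) * dist x x' := by field_simp
      _ ≤ η * dist x x' := mul_le_mul_of_nonneg_right (by linarith) dist_nonneg
    have e3 : (g x - f x) - (g x' - f x') =
        -((fh x - g x) - (fh x' - g x')) + ((fh x - f x) - (fh x' - f x')) := by ring
    calc |(g x - f x) - (g x' - f x')|
        = |-((fh x - g x) - (fh x' - g x')) + ((fh x - f x) - (fh x' - f x'))| := by rw [e3]
    _ ≤ |-((fh x - g x) - (fh x' - g x'))| + |(fh x - f x) - (fh x' - f x')| := abs_add_le _ _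
    _ = |(fh x - g x) - (fh x' - g x')| + |(fh x - f x) - (fh x' - f x')| := by rw [abs_neg]
    _ ≤ B * dist x x' + η * dist x x' := add_le_add h1 h2
    _ = θ * dist x x' := by rw [hθ_def]; ring
  -- the λ-approximation lemma from ACK property (5), (6) and Γ-flatness
  have hlam : ∀ φ ∈ Γ, ∃ lam : ℝ, |lam| ≤ 1 ∧ |φ (F e) - lam| ≤ 2 * μ ∧
      ∀ x x' : M, |(φ (F (T x)) - φ (F (T x'))) - lam * (f x - f x')| ≤ (μ + B) * dist x x' := by
    intro φ hφ
    obtain ⟨n, v, c, hv, hc, hφF⟩ := happrox φ hφ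
    have hvΓ : ∀ k, v k ∈ Γ := fun k => (hVW (hv k)).2
    refine ⟨∑ k, c k, ?_, ?_, ?_⟩
    · calc |∑ k, c k| ≤ ∑ k, |c k| := Finset.abs_sum_le_sum_abs _ _
      _ ≤ 1 := hc
    · have h1 : |φ (F e) - ∑ k, c k * v k e| ≤ μ := by
        have h2 := (φ.comp F - ∑ k, c k • v k).le_opNorm e
        rw [he, mul_one] at h2
        have heq : (φ.comp F - ∑ k, c k • v k) e = φ (F e) - ∑ k, c k * v k e := by
          simp [ContinuousLinearMap.sub_apply, ContinuousLinearMap.sum_apply,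
            ContinuousLinearMap.smul_apply, smul_eq_mul, ContinuousLinearMap.comp_apply]
        rw [heq, Real.norm_eq_abs] at h2
        exact h2.trans hφF.le
      have h2 : |(∑ k, c k * v k e) - ∑ k, c k| ≤ μ := by
        rw [← Finset.sum_sub_distrib]
        calc |∑ k, (c k * v k e - c k)| ≤ ∑ k, |c k * v k e - c k| :=
          Finset.abs_sum_le_sum_abs _ _
        _ ≤ ∑ k, |c k| * μ := by
          apply Finset.sum_le_sum
          intro k _
          have e4 : c k * v k e - c k = c k * (v k e - 1) := by ring
          rw [e4, abs_mul]
          exact mul_le_mul_of_nonneg_left (heprop (v k) (hv k)) (abs_nonneg _)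
        _ = (∑ k, |c k|) * μ := by rw [Finset.sum_mul]
        _ ≤ 1 * μ := mul_le_mul_of_nonneg_right hc hμ_pos.le
        _ = μ := one_mul μ
      calc |φ (F e) - ∑ k, c k|
          ≤ |φ (F e) - ∑ k, c k * v k e| + |(∑ k, c k * v k e) - ∑ k, c k| := abs_sub_le _ _ _
      _ ≤ μ + μ := add_le_add h1 h2
      _ = 2 * μ := by ring
    · intro x x'
      have hDle : ‖T x - T x'‖ ≤ dist x x' := hT1 x x'
      have hφFD : φ (F (T x)) - φ (F (T x')) = (φ.comp F) (T x - T x') := by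
        simp [map_sub]
      have hy₁D : f x - f x' = y₁ (T x - T x') := hf_sub x x'
      have hterm1 : |(φ.comp F) (T x - T x') - ∑ k, c k * (v k (T x - T x'))| ≤
          μ * dist x x' := by
        have heq : (φ.comp F) (T x - T x') - ∑ k, c k * (v k (T x - T x')) =
            (φ.comp F - ∑ k, c k • v k) (T x - T x') := by
          simp [ContinuousLinearMap.sub_apply, ContinuousLinearMap.sum_apply,
            ContinuousLinearMap.smul_apply, smul_eq_mul]
        rw [heq]
        calc |(φ.comp F - ∑ k, c k • v k) (T x - T x')|
            = ‖(φ.comp F - ∑ k, c k • v k) (T x - T x')‖ := (Real.norm_eq_abs _).symm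
        _ ≤ ‖φ.comp F - ∑ k, c k • v k‖ * ‖T x - T x'‖ := ContinuousLinearMap.le_opNorm _ _
        _ ≤ μ * dist x x' := mul_le_mul hφF.le hDle (norm_nonneg _) hμ_pos.le
      have hterm2 : |(∑ k, c k * (v k (T x - T x'))) - (∑ k, c k) * y₁ (T x - T x')| ≤
          B * dist x x' := by
        rw [Finset.sum_mul, ← Finset.sum_sub_distrib]
        calc |∑ k, (c k * (v k (T x - T x')) - c k * y₁ (T x - T x'))|
            ≤ ∑ k, |c k * (v k (T x - T x')) - c k * y₁ (T x - T x')| :=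
          Finset.abs_sum_le_sum_abs _ _
        _ ≤ ∑ k, |c k| * (B * dist x x') := by
          apply Finset.sum_le_sum
          intro k _
          have e5 : c k * (v k (T x - T x')) - c k * y₁ (T x - T x') =
              c k * (v k (T x - T x') - y₁ (T x - T x')) := by ring
          rw [e5, abs_mul]
          apply mul_le_mul_of_nonneg_left _ (abs_nonneg _)
          -- |v k (T x - T x') - y₁ (T x - T x')| ≤ B * dist x x'
          have hvyK : LipschitzWith (KT + KT) (fun a => v k (T a) - y₁ (T a)) := by
            apply LipschitzWith.of_dist_le_mul
            intro a b
            rw [Real.dist_eq]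
            have ha1 : |v k (T a) - v k (T b)| ≤ ‖T a - T b‖ := by
              rw [← map_sub]; exact habs _ (hvΓ k) _
            have ha2 : |y₁ (T a) - y₁ (T b)| ≤ ‖T a - T b‖ := by
              rw [← map_sub]; exact habs _ hy₁Γ _
            have ha3 : ‖T a - T b‖ ≤ (KT : ℝ) * dist a b := by
              have := hKT.dist_le_mul a b
              rwa [dist_eq_norm] at this
            have e6 : (v k (T a) - y₁ (T a)) - (v k (T b) - y₁ (T b)) =
                (v k (T a) - v k (T b)) - (y₁ (T a) - y₁ (T b)) := by ring
            calc |(fun a => v k (T a) - y₁ (T a)) a - (fun a => v k (T a) - y₁ (T a)) b|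
                = |(v k (T a) - v k (T b)) - (y₁ (T a) - y₁ (T b))| := by simp only; rw [e6]
            _ ≤ |v k (T a) - v k (T b)| + |y₁ (T a) - y₁ (T b)| := abs_sub _ _
            _ ≤ (KT : ℝ) * dist a b + (KT : ℝ) * dist a b := by
                have := ha1.trans ha3; have := ha2.trans ha3; linarith [ha1.trans ha3, ha2.trans ha3]
            _ = ((KT + KT : ℝ≥0) : ℝ) * dist a b := by push_cast; ring
          have h7 := norm_sub_le_lipNorm hvyK x x'
          rw [Real.norm_eq_abs] at h7
          have e7 : v k (T x - T x') - y₁ (T x - T x') =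
              (fun a => v k (T a) - y₁ (T a)) x - (fun a => v k (T a) - y₁ (T a)) x' := by
            simp [map_sub]; ring
          rw [e7]
          calc |(fun a => v k (T a) - y₁ (T a)) x - (fun a => v k (T a) - y₁ (T a)) x'|
              ≤ lipNorm (fun a => v k (T a) - y₁ (T a)) * dist x x' := h7
          _ ≤ B * dist x x' :=
            mul_le_mul_of_nonneg_right (hWdiam (v k) (hVW (hv k)) y₁ hy₁WΓ).le dist_nonneg
        _ = (∑ k, |c k|) * (B * dist x x') := by rw [Finset.sum_mul]
        _ ≤ 1 * (B * dist x x') := by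
          apply mul_le_mul_of_nonneg_right hc
          positivity
        _ = B * dist x x' := one_mul _
      rw [hφFD, hy₁D]
      calc |(φ.comp F) (T x - T x') - (∑ k, c k) * y₁ (T x - T x')|
          ≤ |(φ.comp F) (T x - T x') - ∑ k, c k * (v k (T x - T x'))| +
            |(∑ k, c k * (v k (T x - T x'))) - (∑ k, c k) * y₁ (T x - T x')| := abs_sub_le _ _ _
      _ ≤ μ * dist x x' + B * dist x x' := add_le_add hterm1 hterm2
      _ = (μ + B) * dist x x' := by ring
  -- the new map S
  set S : M → Y := fun x => g x • F e + (1 - εa) • (T x - F (T x)) with hS_def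
  have hφS : ∀ φ : Y →L[ℝ] ℝ, ∀ x : M,
      φ (S x) = g x * φ (F e) + (1 - εa) * (φ (T x) - φ (F (T x))) := by
    intro φ x
    rw [hS_def]
    simp [map_add, ContinuousLinearMap.map_smul, map_sub, smul_eq_mul]
  have hy₁S : ∀ x : M, y₁ (S x) = g x := by
    intro x
    have hcomp : y₁ (F (T x)) = y₁ (T x) := by
      have h := congrArg (fun ψ : Y →L[ℝ] ℝ => ψ (T x)) hy₁F
      simpa using h
    rw [hφS y₁ x, hy₁Fe, hcomp]
    ring
  have htle : ∀ φ ∈ Γ, |φ (F e)| ≤ 1 := by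
    intro φ hφ
    calc |φ (F e)| ≤ ‖F e‖ := habs φ hφ _
    _ = 1 := hFe1
  -- the key estimate: |φ (S x) - φ (S x')| ≤ dist x x' for all φ ∈ Γ
  have hmain : ∀ φ ∈ Γ, ∀ x x' : M, |φ (S x) - φ (S x')| ≤ dist x x' := by
    intro φ hφ x x'
    have hexp : φ (S x) - φ (S x') = (g x - g x') * φ (F e) +
        (1 - εa) * ((φ (T x) - φ (T x')) - (φ (F (T x)) - φ (F (T x')))) := by
      rw [hφS φ x, hφS φ x']; ring
    have hφT : |φ (T x) - φ (T x')| ≤ dist x x' := by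
      rw [← map_sub]
      exact (habs φ hφ _).trans (hT1 x x')
    by_cases hV₁ : ‖φ.comp F‖ + (1 - μ) * ‖φ - φ.comp F‖ ≤ 1
    · -- the V₁ case
      have hFe' : |φ (F e)| ≤ ‖φ.comp F‖ := by
        have h2 := (φ.comp F).le_opNorm e
        rw [he, mul_one, Real.norm_eq_abs] at h2
        exact h2
      have h1 : |(g x - g x') * φ (F e)| ≤ ‖φ.comp F‖ * dist x x' := by
        rw [abs_mul]
        calc |g x - g x'| * |φ (F e)| ≤ dist x x' * ‖φ.comp F‖ :=
          mul_le_mul (hg_ptw x x') hFe' (abs_nonneg _) dist_nonneg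
        _ = ‖φ.comp F‖ * dist x x' := mul_comm _ _
      have h2 : |(φ (T x) - φ (T x')) - (φ (F (T x)) - φ (F (T x')))| ≤
          ‖φ - φ.comp F‖ * dist x x' := by
        have heq : (φ (T x) - φ (T x')) - (φ (F (T x)) - φ (F (T x'))) =
            (φ - φ.comp F) (T x - T x') := by
          simp [ContinuousLinearMap.sub_apply, map_sub]
          ring
        rw [heq]
        calc |(φ - φ.comp F) (T x - T x')| = ‖(φ - φ.comp F) (T x - T x')‖ :=
          (Real.norm_eq_abs _).symm
        _ ≤ ‖φ - φ.comp F‖ * ‖T x - T x'‖ := ContinuousLinearMap.le_opNorm _ _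
        _ ≤ ‖φ - φ.comp F‖ * dist x x' :=
          mul_le_mul_of_nonneg_left (hT1 x x') (norm_nonneg _)
      have hcoef : ‖φ.comp F‖ + (1 - εa) * ‖φ - φ.comp F‖ ≤ 1 := by
        have h3 : (1 - εa) * ‖φ - φ.comp F‖ ≤ (1 - μ) * ‖φ - φ.comp F‖ :=
          mul_le_mul_of_nonneg_right (by linarith) (norm_nonneg _)
        linarith
      have h1εa : (0:ℝ) ≤ 1 - εa := by linarith
      calc |φ (S x) - φ (S x')|
          ≤ |(g x - g x') * φ (F e)| +
            |(1 - εa) * ((φ (T x) - φ (T x')) - (φ (F (T x)) - φ (F (T x'))))| := by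
            rw [hexp]; exact abs_add_le _ _
      _ ≤ ‖φ.comp F‖ * dist x x' + (1 - εa) * (‖φ - φ.comp F‖ * dist x x') := by
          apply add_le_add h1
          rw [abs_mul, abs_of_nonneg h1εa]
          exact mul_le_mul_of_nonneg_left h2 h1εa
      _ = (‖φ.comp F‖ + (1 - εa) * ‖φ - φ.comp F‖) * dist x x' := by ring
      _ ≤ 1 * dist x x' := mul_le_mul_of_nonneg_right hcoef dist_nonneg
      _ = dist x x' := one_mul _
    · -- outside V₁ : use property (4) and the λ-approximation
      have hρb : |φ (F e)| ≤ ρ := hρprop φ hφ (fun hmem => hV₁ hmem.2)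
      obtain ⟨lam, hlam1, hlam2, hlam3⟩ := hlam φ hφ
      have hlamρ : |lam| ≤ ρ + 2 * μ := by
        calc |lam| = |φ (F e) - (φ (F e) - lam)| := by ring_nf
        _ ≤ |φ (F e)| + |φ (F e) - lam| := abs_sub _ _
        _ ≤ ρ + 2 * μ := add_le_add hρb hlam2
      set A1 : ℝ := φ (F e) * ((g x - f x) - (g x' - f x')) with hA1
      set A2 : ℝ := (φ (F e) - (1 - εa) * lam) * (f x - f x') with hA2
      set A3 : ℝ := (1 - εa) * (φ (T x) - φ (T x')) with hA3
      set A4 : ℝ := (1 - εa) * ((φ (F (T x)) - φ (F (T x'))) - lam * (f x - f x')) with hA4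
      have hexp2 : φ (S x) - φ (S x') = A1 + (A2 + (A3 - A4)) := by
        rw [hexp, hA1, hA2, hA3, hA4]; ring
      have hb1 : |A1| ≤ ρ * (θ * dist x x') := by
        rw [hA1, abs_mul]
        exact mul_le_mul hρb (hθ_ptw x x') (abs_nonneg _) hρ0
      have hb2 : |A2| ≤ (2 * μ + εa * (ρ + 2 * μ)) * dist x x' := by
        rw [hA2, abs_mul]
        have h5 : |φ (F e) - (1 - εa) * lam| ≤ 2 * μ + εa * (ρ + 2 * μ) := by
          have e8 : φ (F e) - (1 - εa) * lam = (φ (F e) - lam) + εa * lam := by ring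
          rw [e8]
          calc |(φ (F e) - lam) + εa * lam| ≤ |φ (F e) - lam| + |εa * lam| := abs_add_le _ _
          _ = |φ (F e) - lam| + εa * |lam| := by rw [abs_mul, abs_of_pos hεa_pos]
          _ ≤ 2 * μ + εa * (ρ + 2 * μ) :=
            add_le_add hlam2 (mul_le_mul_of_nonneg_left hlamρ hεa_pos.le)
        exact mul_le_mul h5 (hf_ptw' x x') (abs_nonneg _) (by positivity)
      have hb3 : |A3| ≤ (1 - εa) * dist x x' := by
        rw [hA3, abs_mul, abs_of_nonneg (by linarith : (0:ℝ) ≤ 1 - εa)]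
        exact mul_le_mul_of_nonneg_left hφT (by linarith)
      have hb4 : |A4| ≤ (1 - εa) * ((μ + B) * dist x x') := by
        rw [hA4, abs_mul, abs_of_nonneg (by linarith : (0:ℝ) ≤ 1 - εa)]
        exact mul_le_mul_of_nonneg_left (hlam3 x x') (by linarith)
      have hnum : ρ * θ + (2 * μ + εa * (ρ + 2 * μ)) + (1 - εa) + (1 - εa) * (μ + B) ≤ 1 := by
        have n1 : ρ * θ ≤ θ := mul_le_of_le_one_left hθ_nonneg hρ1.le
        have n2 : εa * (ρ + 2 * μ) = εa * ρ + 2 * (εa * μ) := by ring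
        have n3 : εa * μ ≤ μ := mul_le_of_le_one_left hμ_pos.le (by linarith)
        have n4 : εa * ρ = εa - 8 * B := by
          have e10 : εa * ρ = εa - εa * (1 - ρ) := by ring
          rw [e10, h8B]
        have n5 : (1 - εa) * (μ + B) ≤ μ + B :=
          mul_le_of_le_one_left (by positivity) (by linarith)
        linarith [hθ_le, hμB]
      have habs4 : |φ (S x) - φ (S x')| ≤ |A1| + (|A2| + (|A3| + |A4|)) := by
        rw [hexp2]
        have t1 : |A1 + (A2 + (A3 - A4))| ≤ |A1| + |A2 + (A3 - A4)| := abs_add_le _ _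
        have t2 : |A2 + (A3 - A4)| ≤ |A2| + |A3 - A4| := abs_add_le _ _
        have t3 : |A3 - A4| ≤ |A3| + |A4| := abs_sub _ _
        linarith
      have hsum : |A1| + (|A2| + (|A3| + |A4|)) ≤
          (ρ * θ + (2 * μ + εa * (ρ + 2 * μ)) + (1 - εa) + (1 - εa) * (μ + B)) * dist x x' := by
        have h9 := add_le_add hb1 (add_le_add hb2 (add_le_add hb3 hb4))
        have e9 : ρ * (θ * dist x x') + ((2 * μ + εa * (ρ + 2 * μ)) * dist x x' +
            ((1 - εa) * dist x x' + (1 - εa) * ((μ + B) * dist x x'))) =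
            (ρ * θ + (2 * μ + εa * (ρ + 2 * μ)) + (1 - εa) + (1 - εa) * (μ + B)) * dist x x' := by
          ring
        linarith
      calc |φ (S x) - φ (S x')| ≤
          (ρ * θ + (2 * μ + εa * (ρ + 2 * μ)) + (1 - εa) + (1 - εa) * (μ + B)) * dist x x' :=
        le_trans habs4 hsum
      _ ≤ 1 * dist x x' := mul_le_mul_of_nonneg_right hnum dist_nonneg
      _ = dist x x' := one_mul _
  -- S is 1-Lipschitz (via the 1-norming set)
  have hS_ptw : ∀ x x' : M, ‖S x - S x'‖ ≤ dist x x' := by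
    intro x x'
    apply oneNorming_norm_le hY.1 dist_nonneg
    intro φ hφ
    rw [map_sub]
    exact hmain φ hφ x x'
  -- S attains its norm at (r, s)
  have hSrs : ‖S r - S s‖ = dist r s := by
    apply le_antisymm (hS_ptw r s)
    have h1 : y₁ (S r - S s) = g r - g s := by rw [map_sub, hy₁S, hy₁S]
    have h2 : |g r - g s| ≤ ‖S r - S s‖ := by
      rw [← h1]
      exact habs y₁ hy₁Γ _
    rw [← hgrs]
    exact h2
  -- S is a base-point preserving Lipschitz map
  have hSK : LipschitzWith 1 S := by
    apply LipschitzWith.of_dist_le_mul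
    intro x x'
    rw [dist_eq_norm, NNReal.coe_one, one_mul]
    exact hS_ptw x x'
  have hSz : S z = 0 := by
    rw [hS_def]
    simp [hgz, hTz, map_zero]
  -- lipNorm S = 1
  have hSnorm : lipNorm S = 1 := by
    apply le_antisymm
    · apply lipNorm_le' (by norm_num)
      intro x x' _
      rw [one_mul]
      exact hS_ptw x x'
    · have hbdd : BddAbove {u : ℝ | ∃ p' q' : M, p' ≠ q' ∧ u = ‖S p' - S q'‖ / dist p' q'} := by
        refine ⟨1, ?_⟩
        rintro u ⟨a, b, hab, rfl⟩
        rw [div_le_iff₀ (dist_pos.2 hab), one_mul]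
        exact hS_ptw a b
      have hmem : (1 : ℝ) ∈ {u : ℝ | ∃ p' q' : M, p' ≠ q' ∧ u = ‖S p' - S q'‖ / dist p' q'} :=
        ⟨r, s, hrs, by rw [hSrs, div_self hdrs.ne']⟩
      exact le_csSup hbdd hmem
  -- closeness of S to T
  have hC2 : (0:ℝ) < 2 * εa + 3 * μ + B + θ := by positivity
  have hclose_ptw : ∀ φ ∈ Γ, ∀ x x' : M,
      |(φ (T x) - φ (S x)) - (φ (T x') - φ (S x'))| ≤ (2 * εa + 3 * μ + B + θ) * dist x x' := by
    intro φ hφ x x'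
    obtain ⟨lam, hlam1, hlam2, hlam3⟩ := hlam φ hφ
    have hφT : |φ (T x) - φ (T x')| ≤ dist x x' := by
      rw [← map_sub]
      exact (habs φ hφ _).trans (hT1 x x')
    set D1 : ℝ := εa * (φ (T x) - φ (T x')) with hD1
    set D2 : ℝ := (1 - εa) * ((φ (F (T x)) - φ (F (T x'))) - lam * (f x - f x')) with hD2
    set D3 : ℝ := ((1 - εa) * lam - φ (F e)) * (f x - f x') with hD3
    set D4 : ℝ := φ (F e) * ((f x - g x) - (f x' - g x')) with hD4
    have hexp3 : (φ (T x) - φ (S x)) - (φ (T x') - φ (S x')) = D1 + (D2 + (D3 + D4)) := by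
      rw [hφS φ x, hφS φ x', hD1, hD2, hD3, hD4]; ring
    have hd1 : |D1| ≤ εa * dist x x' := by
      rw [hD1, abs_mul, abs_of_pos hεa_pos]
      exact mul_le_mul_of_nonneg_left hφT hεa_pos.le
    have hd2 : |D2| ≤ (μ + B) * dist x x' := by
      rw [hD2, abs_mul, abs_of_nonneg (by linarith : (0:ℝ) ≤ 1 - εa)]
      calc (1 - εa) * |(φ (F (T x)) - φ (F (T x'))) - lam * (f x - f x')| ≤
          1 * ((μ + B) * dist x x') := by
            apply mul_le_mul (by linarith) (hlam3 x x') (abs_nonneg _) (by norm_num)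
      _ = (μ + B) * dist x x' := one_mul _
    have hd3 : |D3| ≤ (2 * μ + εa) * dist x x' := by
      rw [hD3, abs_mul]
      have h5 : |(1 - εa) * lam - φ (F e)| ≤ 2 * μ + εa := by
        have e8 : (1 - εa) * lam - φ (F e) = -(φ (F e) - lam) - εa * lam := by ring
        rw [e8]
        calc |-(φ (F e) - lam) - εa * lam| ≤ |-(φ (F e) - lam)| + |εa * lam| := abs_sub _ _
        _ = |φ (F e) - lam| + εa * |lam| := by rw [abs_neg, abs_mul, abs_of_pos hεa_pos]
        _ ≤ 2 * μ + εa * 1 := add_le_add hlam2 (mul_le_mul_of_nonneg_left hlam1 hεa_pos.le)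
        _ = 2 * μ + εa := by ring
      exact mul_le_mul h5 (hf_ptw' x x') (abs_nonneg _) (by positivity)
    have hd4 : |D4| ≤ θ * dist x x' := by
      rw [hD4, abs_mul]
      have h6 : |(f x - g x) - (f x' - g x')| ≤ θ * dist x x' := by
        have e9 : (f x - g x) - (f x' - g x') = -((g x - f x) - (g x' - f x')) := by ring
        rw [e9, abs_neg]
        exact hθ_ptw x x'
      calc |φ (F e)| * |(f x - g x) - (f x' - g x')| ≤ 1 * (θ * dist x x') :=
        mul_le_mul (htle φ hφ) h6 (abs_nonneg _) (by norm_num)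
      _ = θ * dist x x' := one_mul _
    have habs4 : |(φ (T x) - φ (S x)) - (φ (T x') - φ (S x'))| ≤ |D1| + (|D2| + (|D3| + |D4|)) := by
      rw [hexp3]
      have t1 : |D1 + (D2 + (D3 + D4))| ≤ |D1| + |D2 + (D3 + D4)| := abs_add_le _ _
      have t2 : |D2 + (D3 + D4)| ≤ |D2| + |D3 + D4| := abs_add_le _ _
      have t3 : |D3 + D4| ≤ |D3| + |D4| := abs_add_le _ _
      linarith
    have e11 : εa * dist x x' + ((μ + B) * dist x x' + ((2 * μ + εa) * dist x x' +
        θ * dist x x')) = (2 * εa + 3 * μ + B + θ) * dist x x' := by ring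
    linarith [habs4, hd1, hd2, hd3, hd4]
  have hclose : lipNorm (fun x => T x - S x) < ε := by
    have h1 : lipNorm (fun x => T x - S x) ≤ 2 * εa + 3 * μ + B + θ := by
      apply lipNorm_le' hC2.le
      intro x x' _
      apply oneNorming_norm_le hY.1 (by positivity)
      intro φ hφ
      have e12 : φ ((T x - S x) - (T x' - S x')) =
          (φ (T x) - φ (S x)) - (φ (T x') - φ (S x')) := by
        simp [map_sub]
      rw [e12]
      exact hclose_ptw φ hφ x x'
    have h2 : 2 * εa + 3 * μ + B + θ < ε := by
      have : θ ≤ 2 * B := hθ_le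
      linarith [hμB, hB_le, hεa_le, hε]
    linarith
  exact ⟨S, ⟨⟨1, hSK⟩, hSz⟩, hSnorm, r, s, hrs, hSrs, lt_of_lt_of_le hmol hB_lt_ε.le, hclose⟩
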